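/- Let C be a finite uniquely decodable code over the binary alphabet {a,b}. Then ∑_{w ∈ C} 3^{-|w|} · 2^{[w]_a} ≤ 1, where |w| is the length of w and [w]_a is the number of occurrences of the letter a in w. -/

import Mathlib

/-- Unique decodability of a finite set of words. -/
def UniquelyDecodable {α : Type*} (C : Finset (List α)) : Prop :=
  ∀ l₁ l₂ : List (List α), (∀ w ∈ l₁, w ∈ C) → (∀ w ∈ l₂, w ∈ C) →
    l₁.flatten = l₂.flatten → l₁ = l₂

noncomputable def muW (w : List Bool) : ℝ := ((3 : ℝ) ^ w.length)⁻¹ * 2 ^ (w.count true)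

lemma muW_pos (w : List Bool) : 0 < muW w := by
  unfold muW; positivity

lemma muW_append (u v : List Bool) : muW (u ++ v) = muW u * muW v := by
  simp only [muW, List.length_append, List.count_append, pow_add]
  rw [mul_inv]
  ring

lemma muW_nil : muW [] = 1 := by simp [muW]

lemma muW_join (l : List (List Bool)) : muW l.flatten = (l.map muW).prod := by
  induction l with
  | nil => simp [muW_nil]
  | cons h t ih => simp [muW_append, ih]

lemma muW_cons_true (l : List Bool) : muW (true :: l) = 2 / 3 * muW l := by
  simp only [muW, List.length_cons, List.count_cons, pow_succ]
  norm_num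
  ring

lemma muW_cons_false (l : List Bool) : muW (false :: l) = 1 / 3 * muW l := by
  simp only [muW, List.length_cons, List.count_cons, pow_succ]
  norm_num
  ring

def allB : ℕ → Finset (List Bool)
  | 0 => {[]}
  | n + 1 => (allB n).image (List.cons true) ∪ (allB n).image (List.cons false)

lemma mem_allB (n : ℕ) (l : List Bool) : l ∈ allB n ↔ l.length = n := by
  induction n generalizing l with
  | zero => simp [allB, List.length_eq_zero_iff]
  | succ n ih =>
    cases l with
    | nil => simp [allB]
    | cons b t =>
      cases b <;> simp [allB, ih]

lemma sum_allB (n : ℕ) : ∑ w ∈ allB n, muW w = 1 := by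
  induction n with
  | zero => simp [allB, muW_nil]
  | succ n ih =>
    have hdisj : Disjoint ((allB n).image (List.cons true)) ((allB n).image (List.cons false)) := by
      rw [Finset.disjoint_left]
      rintro w hw1 hw2
      simp only [Finset.mem_image] at hw1 hw2
      obtain ⟨a, _, ha⟩ := hw1
      obtain ⟨b, _, hb⟩ := hw2
      rw [← ha] at hb
      exact Bool.noConfusion (List.head_eq_of_cons_eq hb)
    rw [show allB (n + 1) = (allB n).image (List.cons true) ∪ (allB n).image (List.cons false) from rfl,
      Finset.sum_union hdisj,
      Finset.sum_image (fun a _ b _ h => List.tail_eq_of_cons_eq h),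
      Finset.sum_image (fun a _ b _ h => List.tail_eq_of_cons_eq h)]
    simp only [muW_cons_true, muW_cons_false, ← Finset.mul_sum, ih]
    norm_num

lemma sum_le_of_len_eq (D : Finset (List Bool)) (n : ℕ) (h : ∀ w ∈ D, w.length = n) :
    ∑ w ∈ D, muW w ≤ 1 := by
  rw [← sum_allB n]
  apply Finset.sum_le_sum_of_subset_of_nonneg
  · intro w hw; rw [mem_allB]; exact h w hw
  · intro w _ _; exact (muW_pos w).le

lemma sum_le_of_len_le (D : Finset (List Bool)) (M : ℕ)
    (h : ∀ w ∈ D, 1 ≤ w.length ∧ w.length ≤ M) :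
    ∑ w ∈ D, muW w ≤ M := by
  have hD : D = (Finset.range M).biUnion (fun n => D.filter (fun w => w.length = n + 1)) := by
    ext w
    simp only [Finset.mem_biUnion, Finset.mem_range, Finset.mem_filter]
    constructor
    · intro hw
      obtain ⟨h1, h2⟩ := h w hw
      exact ⟨w.length - 1, by omega, hw, by omega⟩
    · rintro ⟨n, _, hw, _⟩; exact hw
  rw [hD, Finset.sum_biUnion]
  · calc ∑ n ∈ Finset.range M, ∑ w ∈ D.filter (fun w => w.length = n + 1), muW w
        ≤ ∑ _n ∈ Finset.range M, (1 : ℝ) := by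
          apply Finset.sum_le_sum
          intro n _
          exact sum_le_of_len_eq _ (n + 1) (fun w hw => (Finset.mem_filter.mp hw).2)
      _ = M := by simp
  · intro i _ j _ hij
    rw [Function.onFun, Finset.disjoint_left]
    intro w hwi hwj
    rw [Finset.mem_filter] at hwi hwj
    omega

lemma pow_sum_le (C : Finset (List Bool)) (hne : ∀ w ∈ C, w ≠ []) (hud : UniquelyDecodable C)
    (L : ℕ) (hL : ∀ w ∈ C, w.length ≤ L) (N : ℕ) (hN : 1 ≤ N) :
    (∑ w ∈ C, muW w) ^ N ≤ (N : ℝ) * L := by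
  have key : (∑ w ∈ C, muW w) ^ N
      = ∑ p ∈ Fintype.piFinset (fun _ : Fin N => C), muW (List.ofFn p).flatten := by
    have h1 : (∑ w ∈ C, muW w) ^ N = ∏ _i : Fin N, ∑ w ∈ C, muW w := by
      rw [Finset.prod_const, Finset.card_univ, Fintype.card_fin]
    rw [h1, Finset.prod_univ_sum]
    apply Finset.sum_congr rfl
    intro p _
    rw [muW_join]
    rw [List.map_ofFn, List.prod_ofFn]
    rfl
  have hinj : Set.InjOn (fun p : Fin N → List Bool => (List.ofFn p).flatten)
      (Fintype.piFinset (fun _ : Fin N => C)) := by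
    intro p hp q hq hpq
    have hp' : ∀ w ∈ List.ofFn p, w ∈ C := by
      intro w hw
      rw [List.mem_ofFn] at hw
      obtain ⟨i, rfl⟩ := hw
      exact (Fintype.mem_piFinset.mp hp) i
    have hq' : ∀ w ∈ List.ofFn q, w ∈ C := by
      intro w hw
      rw [List.mem_ofFn] at hw
      obtain ⟨i, rfl⟩ := hw
      exact (Fintype.mem_piFinset.mp hq) i
    have := hud (List.ofFn p) (List.ofFn q) hp' hq' hpq
    exact List.ofFn_injective this
  rw [key, ← Finset.sum_image hinj,
    show ((N : ℝ) * L) = ((N * L : ℕ) : ℝ) by push_cast; ring]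
  apply sum_le_of_len_le
  intro w hw
  rw [Finset.mem_image] at hw
  obtain ⟨p, hp, rfl⟩ := hw
  have hpC : ∀ i, p i ∈ C := Fintype.mem_piFinset.mp hp
  have hlen : (List.ofFn p).flatten.length = ∑ i : Fin N, (p i).length := by
    rw [List.length_flatten, List.map_ofFn, List.sum_ofFn]
    rfl
  constructor
  · rw [hlen]
    have : ∑ _i : Fin N, 1 ≤ ∑ i : Fin N, (p i).length := by
      apply Finset.sum_le_sum
      intro i _
      have := hne (p i) (hpC i)
      exact Nat.one_le_iff_ne_zero.mpr (fun h0 => this (List.length_eq_zero_iff.mp h0))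
    calc 1 ≤ N := hN
      _ = ∑ _i : Fin N, 1 := by simp
      _ ≤ ∑ i : Fin N, (p i).length := this
  · rw [hlen]
    calc ∑ i : Fin N, (p i).length ≤ ∑ _i : Fin N, L :=
          Finset.sum_le_sum (fun i _ => hL (p i) (hpC i))
      _ = N * L := by simp [mul_comm]

theorem stmt_1 (C : Finset (List Bool))
    (hne : ∀ w ∈ C, w ≠ [])
    (hud : UniquelyDecodable C) :
    ∑ w ∈ C, ((3 : ℝ) ^ w.length)⁻¹ * 2 ^ (w.count true) ≤ 1 := by
  have hS : ∑ w ∈ C, ((3 : ℝ) ^ w.length)⁻¹ * 2 ^ (w.count true) = ∑ w ∈ C, muW w := rfl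
  rw [hS]
  set S := ∑ w ∈ C, muW w with hSdef
  set L := C.sup List.length with hLdef
  have hbound : ∀ N : ℕ, 1 ≤ N → S ^ N ≤ (N : ℝ) * L :=
    pow_sum_le C hne hud L (fun w hw => Finset.le_sup hw)
  by_contra hcon
  push_neg at hcon
  set ε := S - 1 with hεdef
  have hε0 : 0 < ε := by linarith
  obtain ⟨N₀, hN₀⟩ := exists_nat_gt ((2 * (L : ℝ) + 1) / ε ^ 2)
  set N := N₀ + 1 with hNdef
  have hNgt : ((2 * (L : ℝ) + 1) / ε ^ 2) < N := by
    rw [hNdef]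
    push_cast
    linarith
  have hNε : N * ε ^ 2 > 2 * (L : ℝ) + 1 := by
    rw [div_lt_iff₀ (by positivity)] at hNgt
    linarith
  have hN1 : (1 : ℝ) ≤ N := by exact_mod_cast Nat.le_add_left 1 N₀
  -- Bernoulli: S^N ≥ 1 + N ε
  have hbern : 1 + (N : ℝ) * ε ≤ S ^ N := by
    have := one_add_mul_le_pow (by linarith : (-2 : ℝ) ≤ ε) N
    have hS1 : 1 + ε = S := by linarith
    rwa [hS1] at this
  have hsq : ((N : ℝ) * ε) ^ 2 ≤ S ^ (2 * N) := by
    have h1 : ((N : ℝ) * ε) ^ 2 ≤ (1 + (N : ℝ) * ε) ^ 2 := by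
      have hNε0 : 0 ≤ (N : ℝ) * ε := by positivity
      nlinarith
    have h2 : (1 + (N : ℝ) * ε) ^ 2 ≤ (S ^ N) ^ 2 := by
      have : 0 ≤ 1 + (N : ℝ) * ε := by positivity
      nlinarith
    calc ((N : ℝ) * ε) ^ 2 ≤ (S ^ N) ^ 2 := h1.trans h2
      _ = S ^ (2 * N) := by rw [← pow_mul, mul_comm]
  have hub : S ^ (2 * N) ≤ ((2 * N : ℕ) : ℝ) * L := hbound (2 * N) (by omega)
  have hcast : ((N : ℝ)) = (N₀ : ℝ) + 1 := by rw [hNdef]; push_cast; ring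
  have hfin : ((N : ℝ) * ε) ^ 2 ≤ 2 * (N : ℝ) * L := by
    push_cast at hub
    calc ((N : ℝ) * ε) ^ 2 ≤ S ^ (2 * N) := hsq
      _ ≤ 2 * (N : ℝ) * L := by rw [hcast] at hub ⊢; linarith [hub]
  -- but (N ε)^2 = N * (N ε²) > N * (2L+1) ≥ 2 N L + N > 2 N L
  have : (N : ℝ) * (2 * (L : ℝ) + 1) < (N : ℝ) * ((N : ℝ) * ε ^ 2) := by
    apply mul_lt_mul_of_pos_left hNε (by linarith)
  nlinarith [this, hfin, hN1]
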